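/- Let p be an odd prime, a an integer with 0 ≤ a < p/2, and r ≥ 0 an integer. Then ∑_{k=0}^{p-2a} ((2a)_k / k!)^{2r+1} * H_k ≡ -∑_{k=0}^{p-2a} ((2a)_k / k!)^{2r+1} * H_{2a+k-1} (mod p), where the congruence means the difference of the two rational numbers has p-adic valuation at least 1. -/

import Mathlib

open Finset

private def Hzs (p j : ℕ) : ZMod p := ∑ i ∈ Finset.range j, ((i + 1 : ℕ) : ZMod p)⁻¹

private def Gns (p j : ℕ) : ℕ := ∑ i ∈ Finset.range j, (p - 1).factorial / (i + 1)

private lemma cast_ne_zero_of_lt (p : ℕ) [hp : Fact p.Prime] {i : ℕ} (h0 : i ≠ 0) (h : i < p) :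
    (i : ZMod p) ≠ 0 := by
  rw [Ne, ZMod.natCast_eq_zero_iff]
  intro hdvd
  exact absurd (Nat.le_of_dvd (Nat.pos_of_ne_zero h0) hdvd) (not_le.2 h)

private lemma neg_cast_of_add_eq (p : ℕ) {x y : ℕ} (h : x + y = p) :
    ((x : ZMod p)) = -(y : ZMod p) := by
  have h2 : ((x + y : ℕ) : ZMod p) = 0 := by rw [h]; exact ZMod.natCast_self p
  rw [Nat.cast_add] at h2
  exact eq_neg_of_add_eq_zero_left h2

private lemma Hzs_p_sub_one (p : ℕ) [hp : Fact p.Prime] (hodd : Odd p) : Hzs p (p - 1) = 0 := by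
  have hp3 : 3 ≤ p := by
    have := hp.out.two_le
    rcases hodd with ⟨t, ht⟩
    omega
  have key : Hzs p (p - 1) + Hzs p (p - 1) = 0 := by
    nth_rewrite 1 [Hzs, ← Finset.sum_range_reflect]
    rw [Hzs, ← Finset.sum_add_distrib]
    apply Finset.sum_eq_zero
    intro i hi
    rw [Finset.mem_range] at hi
    have h1 : (p - 1 - 1 - i + 1) + (i + 1) = p := by omega
    rw [neg_cast_of_add_eq p h1, inv_neg, neg_add_cancel]
  have h2 : (2 : ZMod p) * Hzs p (p - 1) = 0 := by rw [two_mul]; exact key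
  have h2ne : (2 : ZMod p) ≠ 0 := by
    have := cast_ne_zero_of_lt p (i := 2) (by norm_num) (by omega)
    simpa using this
  rcases mul_eq_zero.1 h2 with h | h
  · exact absurd h h2ne
  · exact h

private lemma Hzs_reflect (p : ℕ) [hp : Fact p.Prime] (hodd : Odd p) {j : ℕ} (hj : j ≤ p - 1) :
    Hzs p (p - 1 - j) = Hzs p j := by
  have hp3 : 3 ≤ p := by
    have := hp.out.two_le
    rcases hodd with ⟨t, ht⟩
    omega
  have split : Hzs p (p - 1 - j) + ∑ i ∈ Finset.Ico (p - 1 - j) (p - 1), ((i + 1 : ℕ) : ZMod p)⁻¹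
      = Hzs p (p - 1) := by
    rw [Hzs, Hzs, Finset.range_eq_Ico, Finset.range_eq_Ico]
    exact Finset.sum_Ico_consecutive _ (by omega) (by omega)
  have tail : ∑ i ∈ Finset.Ico (p - 1 - j) (p - 1), ((i + 1 : ℕ) : ZMod p)⁻¹ = - Hzs p j := by
    rw [Finset.sum_Ico_eq_sum_range]
    have hlen : p - 1 - (p - 1 - j) = j := by omega
    rw [hlen, Hzs, ← Finset.sum_range_reflect (fun i => ((i + 1 : ℕ) : ZMod p)⁻¹) j, ← Finset.sum_neg_distrib]
    apply Finset.sum_congr rfl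
    intro i hi
    rw [Finset.mem_range] at hi
    have h1 : (p - 1 - j + i + 1) + (j - 1 - i + 1) = p := by omega
    rw [neg_cast_of_add_eq p h1, inv_neg]
  rw [tail] at split
  have hz := Hzs_p_sub_one p hodd
  rw [hz] at split
  rwa [add_neg_eq_zero] at split

private lemma Gns_cast (p : ℕ) [hp : Fact p.Prime] {j : ℕ} (hj : j ≤ p - 1) :
    ((Gns p j : ℕ) : ℚ) = ((p - 1).factorial : ℚ) * harmonic j := by
  rw [Gns, harmonic, Nat.cast_sum, Finset.mul_sum]
  apply Finset.sum_congr rfl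
  intro i hi
  rw [Finset.mem_range] at hi
  have hdvd : (i + 1) ∣ (p - 1).factorial := Nat.dvd_factorial (by omega) (by omega)
  rw [Nat.cast_div hdvd (by exact_mod_cast (Nat.succ_ne_zero i))]
  rw [div_eq_mul_inv]

private lemma Gns_mod (p : ℕ) [hp : Fact p.Prime] {j : ℕ} (hj : j ≤ p - 1) :
    ((Gns p j : ℕ) : ZMod p) = - Hzs p j := by
  rw [Gns, Nat.cast_sum, Hzs, ← Finset.sum_neg_distrib]
  apply Finset.sum_congr rfl
  intro i hi
  rw [Finset.mem_range] at hi
  have hdvd : (i + 1) ∣ (p - 1).factorial := Nat.dvd_factorial (by omega) (by omega)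
  have h1 : (p - 1).factorial / (i + 1) * (i + 1) = (p - 1).factorial := Nat.div_mul_cancel hdvd
  have hne : ((i + 1 : ℕ) : ZMod p) ≠ 0 :=
    cast_ne_zero_of_lt p (by omega) (by have := hp.out.two_le; omega)
  have h2 : (((p - 1).factorial / (i + 1) : ℕ) : ZMod p) * ((i + 1 : ℕ) : ZMod p) = -1 := by
    rw [← Nat.cast_mul, h1, ZMod.wilsons_lemma]
  apply mul_right_cancel₀ hne
  rw [h2, neg_mul, inv_mul_cancel₀ hne]

private lemma poch_mod (p : ℕ) [hp : Fact p.Prime] (a n : ℕ) (hn : 2 * a + n = p) :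
    ∀ j : ℕ, j ≤ n →
      (((2 * a).ascFactorial j : ℕ) : ZMod p) = (-1) ^ j * ((n.descFactorial j : ℕ) : ZMod p)
  | 0, _ => by simp
  | (j + 1), hj => by
    have hj' : j ≤ n := by omega
    have key : ((2 * a + j : ℕ) : ZMod p) = -((n - j : ℕ) : ZMod p) :=
      neg_cast_of_add_eq p (by omega)
    rw [Nat.ascFactorial_succ, Nat.descFactorial_succ, Nat.cast_mul, Nat.cast_mul,
      poch_mod p a n hn j hj', key, pow_succ]
    ring


private def tQ (a m k : ℕ) : ℚ :=
  ((((2 * a).ascFactorial k : ℕ) : ℚ) / (k.factorial : ℚ)) ^ m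
    * (harmonic k + harmonic (2 * a + k - 1))

private lemma pair_norm (p : ℕ) [hp : Fact p.Prime] (hodd : Odd p) (a : ℕ) (ha1 : 1 ≤ a)
    (ha : 2 * a < p) (m : ℕ) (hm : Odd m) (k : ℕ) (hk : k ≤ p - 2 * a) :
    ‖((tQ a m k + tQ a m (p - 2 * a - k) : ℚ) : ℚ_[p])‖ ≤ (p : ℝ)⁻¹ := by
  have hp3 : 3 ≤ p := by
    have := hp.out.two_le
    rcases hodd with ⟨t, ht⟩
    omega
  set n := p - 2 * a with hndef
  have hn : 2 * a + n = p := by omega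
  have hkn : k ≤ n := hk
  have hidx : 2 * a + (n - k) - 1 = p - 1 - k := by omega
  set U : ℕ := (2 * a).ascFactorial k ^ m * ((n - k).factorial) ^ m
      * (Gns p k + Gns p (2 * a + k - 1))
    + (2 * a).ascFactorial (n - k) ^ m * (k.factorial) ^ m
      * (Gns p (n - k) + Gns p (p - 1 - k)) with hU
  set V : ℕ := (k.factorial * (n - k).factorial) ^ m * (p - 1).factorial with hV
  have hf1 : ((k.factorial : ℕ) : ℚ) ≠ 0 := by
    exact_mod_cast (Nat.factorial_pos k).ne'
  have hf2 : (((n - k).factorial : ℕ) : ℚ) ≠ 0 := by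
    exact_mod_cast (Nat.factorial_pos (n - k)).ne'
  have hf3 : (((p - 1).factorial : ℕ) : ℚ) ≠ 0 := by
    exact_mod_cast (Nat.factorial_pos (p - 1)).ne'
  have hVQ : (V : ℚ) ≠ 0 := by
    rw [hV]
    push_cast
    positivity
  -- the rational identity
  have hexprU : (tQ a m k + tQ a m (n - k) : ℚ) = (U : ℚ) / (V : ℚ) := by
    rw [eq_div_iff hVQ]
    have g1 := Gns_cast p (j := k) (by omega)
    have g2 := Gns_cast p (j := 2 * a + k - 1) (by omega)
    have g3 := Gns_cast p (j := n - k) (by omega)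
    have g4 := Gns_cast p (j := p - 1 - k) (by omega)
    rw [tQ, tQ, hidx, hU, hV]
    simp only [Nat.cast_mul, Nat.cast_pow, Nat.cast_add]
    rw [g1, g2, g3, g4]
    simp only [div_pow]
    field_simp
    ring
  -- the mod-p computation
  have hUmod : (U : ZMod p) = 0 := by
    have hzA : Hzs p (p - 1 - k) = Hzs p k := Hzs_reflect p hodd (by omega)
    have hzB : Hzs p (n - k) = Hzs p (2 * a + k - 1) := by
      have h' : n - k = p - 1 - (2 * a + k - 1) := by omega
      rw [h']
      exact Hzs_reflect p hodd (by omega)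
    have e1 : ((n.descFactorial k : ℕ) : ZMod p) * (((n - k).factorial : ℕ) : ZMod p)
        = ((n.factorial : ℕ) : ZMod p) := by
      rw [← Nat.cast_mul, mul_comm, Nat.factorial_mul_descFactorial hkn]
    have e2 : ((n.descFactorial (n - k) : ℕ) : ZMod p) * ((k.factorial : ℕ) : ZMod p)
        = ((n.factorial : ℕ) : ZMod p) := by
      have h2 := Nat.factorial_mul_descFactorial (Nat.sub_le n k)
      rw [show n - (n - k) = k by omega] at h2
      rw [← Nat.cast_mul, mul_comm, h2]
    have hsign : ((-1 : ZMod p)) ^ ((n - k) * m) = -(-1 : ZMod p) ^ (k * m) := by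
      have hnodd : Odd n := by
        rcases hodd with ⟨t, ht⟩
        exact ⟨t - a, by omega⟩
      have hodd2 : Odd (n * m) := hnodd.mul hm
      have h1 : (-1 : ZMod p) ^ ((n - k) * m) * (-1) ^ (k * m) = -1 := by
        rw [← pow_add, ← Nat.add_mul, Nat.sub_add_cancel hkn]
        exact hodd2.neg_one_pow
      have h2 : (-1 : ZMod p) ^ (k * m) * (-1) ^ (k * m) = 1 := by
        rw [← pow_add]
        exact (Even.neg_one_pow ⟨k * m, rfl⟩)
      calc (-1 : ZMod p) ^ ((n - k) * m)
          = (-1 : ZMod p) ^ ((n - k) * m) * ((-1) ^ (k * m) * (-1) ^ (k * m)) := by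
            rw [h2, mul_one]
        _ = ((-1 : ZMod p) ^ ((n - k) * m) * (-1) ^ (k * m)) * (-1) ^ (k * m) := by ring
        _ = -(-1 : ZMod p) ^ (k * m) := by rw [h1]; ring
    rw [hU]
    simp only [Nat.cast_mul, Nat.cast_pow, Nat.cast_add]
    rw [poch_mod p a n hn k hkn, poch_mod p a n hn (n - k) (Nat.sub_le n k),
      Gns_mod p (j := k) (by omega), Gns_mod p (j := 2 * a + k - 1) (by omega),
      Gns_mod p (j := n - k) (by omega), Gns_mod p (j := p - 1 - k) (by omega),
      hzA, hzB, mul_pow, mul_pow, ← pow_mul, ← pow_mul, hsign]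
    have p1 : ((n.descFactorial k : ℕ) : ZMod p) ^ m * (((n - k).factorial : ℕ) : ZMod p) ^ m
        = ((n.factorial : ℕ) : ZMod p) ^ m := by rw [← mul_pow, e1]
    have p2 : ((n.descFactorial (n - k) : ℕ) : ZMod p) ^ m * ((k.factorial : ℕ) : ZMod p) ^ m
        = ((n.factorial : ℕ) : ZMod p) ^ m := by rw [← mul_pow, e2]
    linear_combination
      ((-1 : ZMod p) ^ (k * m) * (-Hzs p k + -Hzs p (2 * a + k - 1))) * p1
      - ((-1 : ZMod p) ^ (k * m) * (-Hzs p (2 * a + k - 1) + -Hzs p k)) * p2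
  have hdvdU : (p : ℤ) ∣ (U : ℤ) := by
    have h1 : p ∣ U := (ZMod.natCast_eq_zero_iff U p).1 hUmod
    exact_mod_cast h1
  have hUnorm : ‖((U : ℤ) : ℚ_[p])‖ ≤ (p : ℝ)⁻¹ := by
    have h1 := (Padic.norm_int_le_pow_iff_dvd (U : ℤ) 1).2 (by simpa using hdvdU)
    simpa using h1
  have hVnorm : ‖((V : ℤ) : ℚ_[p])‖ = 1 := by
    rcases lt_or_eq_of_le (Padic.norm_int_le_one (p := p) (V : ℤ)) with hlt | heq
    · exfalso
      have hdv : (p : ℤ) ∣ (V : ℤ) := (Padic.norm_intCast_lt_one_iff).1 hlt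
      have hdn : p ∣ V := by exact_mod_cast hdv
      rw [hV] at hdn
      rcases (Nat.Prime.dvd_mul hp.out).1 hdn with h1 | h1
      · have h2 := hp.out.dvd_of_dvd_pow h1
        rcases (Nat.Prime.dvd_mul hp.out).1 h2 with h3 | h3
        · exact absurd ((Nat.Prime.dvd_factorial hp.out).1 h3) (by omega)
        · exact absurd ((Nat.Prime.dvd_factorial hp.out).1 h3) (by omega)
      · exact absurd ((Nat.Prime.dvd_factorial hp.out).1 h1) (by omega)
    · exact heq
  have hcastU : (((U : ℚ)) : ℚ_[p]) = ((U : ℤ) : ℚ_[p]) := by push_cast; ring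
  have hcastV : (((V : ℚ)) : ℚ_[p]) = ((V : ℤ) : ℚ_[p]) := by push_cast; ring
  rw [hexprU, Rat.cast_div, norm_div, hcastU, hcastV, hVnorm, div_one]
  exact hUnorm
theorem pochhammer_harmonic_sum_congr (p : ℕ) [Fact p.Prime] (hp : Odd p)
    (a : ℕ) (ha : 2 * a < p) (r : ℕ) :
    ‖((∑ k ∈ Finset.range (p - 2 * a + 1),
          ((ascPochhammer ℚ k).eval (2 * a : ℚ) / k.factorial) ^ (2 * r + 1) * harmonic k
        + ∑ k ∈ Finset.range (p - 2 * a + 1),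
          ((ascPochhammer ℚ k).eval (2 * a : ℚ) / k.factorial) ^ (2 * r + 1)
            * harmonic (2 * a + k - 1) : ℚ) : ℚ_[p])‖ ≤ (p : ℝ)⁻¹ := by
  have hp3 : 3 ≤ p := by
    have := (Fact.out : p.Prime).two_le
    rcases hp with ⟨t, ht⟩
    omega
  rcases Nat.eq_zero_or_pos a with rfl | ha1
  · -- a = 0 : every term vanishes
    have hz1 : ∀ k ∈ Finset.range (p - 2 * 0 + 1),
        ((ascPochhammer ℚ k).eval (2 * (0 : ℕ) : ℚ) / k.factorial) ^ (2 * r + 1)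
          * harmonic k = 0 := by
      intro k _
      rcases Nat.eq_zero_or_pos k with rfl | hk
      · simp [harmonic]
      · rw [show ((2 * (0 : ℕ) : ℚ)) = 0 by norm_num,
          ascPochhammer_ne_zero_eval_zero (S := ℚ) (n := k) hk.ne', zero_div, zero_pow (by omega), zero_mul]
    have hz2 : ∀ k ∈ Finset.range (p - 2 * 0 + 1),
        ((ascPochhammer ℚ k).eval (2 * (0 : ℕ) : ℚ) / k.factorial) ^ (2 * r + 1)
          * harmonic (2 * 0 + k - 1) = 0 := by
      intro k _
      rcases Nat.eq_zero_or_pos k with rfl | hk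
      · simp [harmonic]
      · rw [show ((2 * (0 : ℕ) : ℚ)) = 0 by norm_num,
          ascPochhammer_ne_zero_eval_zero (S := ℚ) (n := k) hk.ne', zero_div, zero_pow (by omega), zero_mul]
    rw [Finset.sum_eq_zero hz1, Finset.sum_eq_zero hz2]
    norm_num
  · set n := p - 2 * a with hndef
    have hconv : ∀ k : ℕ, ((ascPochhammer ℚ k).eval (2 * a : ℚ))
        = (((2 * a).ascFactorial k : ℕ) : ℚ) := by
      intro k
      rw [Nat.cast_ascFactorial]
      congr 1
      push_cast
      ring
    have hexpr : (∑ k ∈ Finset.range (n + 1),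
          ((ascPochhammer ℚ k).eval (2 * a : ℚ) / k.factorial) ^ (2 * r + 1) * harmonic k
        + ∑ k ∈ Finset.range (n + 1),
          ((ascPochhammer ℚ k).eval (2 * a : ℚ) / k.factorial) ^ (2 * r + 1)
            * harmonic (2 * a + k - 1) : ℚ)
        = ∑ k ∈ Finset.range (n + 1), tQ a (2 * r + 1) k := by
      rw [← Finset.sum_add_distrib]
      apply Finset.sum_congr rfl
      intro k _
      rw [hconv, tQ]
      ring
    rw [hexpr]
    have h2S : (2 : ℚ) * ∑ k ∈ Finset.range (n + 1), tQ a (2 * r + 1) k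
        = ∑ k ∈ Finset.range (n + 1), (tQ a (2 * r + 1) k + tQ a (2 * r + 1) (n - k)) := by
      rw [Finset.sum_add_distrib, two_mul]
      congr 1
      have h := Finset.sum_range_reflect (fun k => tQ a (2 * r + 1) k) (n + 1)
      simp only [Nat.add_sub_cancel] at h
      exact h.symm
    have hfull : ‖((2 * ∑ k ∈ Finset.range (n + 1), tQ a (2 * r + 1) k : ℚ) : ℚ_[p])‖
        ≤ (p : ℝ)⁻¹ := by
      rw [h2S, Rat.cast_sum]
      apply IsUltrametricDist.norm_sum_le_of_forall_le_of_nonneg (by positivity)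
      intro k hk
      rw [Finset.mem_range] at hk
      exact pair_norm p hp a ha1 ha (2 * r + 1) ⟨r, by ring⟩ k (by omega)
    have h2norm : ‖(((2 : ℚ)) : ℚ_[p])‖ = 1 := by
      have hc : (((2 : ℚ)) : ℚ_[p]) = ((2 : ℤ) : ℚ_[p]) := by norm_cast
      rw [hc]
      rcases lt_or_eq_of_le (Padic.norm_int_le_one (p := p) (2 : ℤ)) with hlt | heq
      · exfalso
        have hdv : (p : ℤ) ∣ (2 : ℤ) := (Padic.norm_intCast_lt_one_iff).1 hlt
        have hdn : p ∣ 2 := by exact_mod_cast hdv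
        have := Nat.le_of_dvd (by norm_num) hdn
        omega
      · exact heq
    calc ‖((∑ k ∈ Finset.range (n + 1), tQ a (2 * r + 1) k : ℚ) : ℚ_[p])‖
        = ‖(((2 : ℚ)) : ℚ_[p])‖
            * ‖((∑ k ∈ Finset.range (n + 1), tQ a (2 * r + 1) k : ℚ) : ℚ_[p])‖ := by
          rw [h2norm, one_mul]
      _ = ‖((2 * ∑ k ∈ Finset.range (n + 1), tQ a (2 * r + 1) k : ℚ) : ℚ_[p])‖ := by
          rw [← norm_mul, ← Rat.cast_mul]
      _ ≤ (p : ℝ)⁻¹ := hfull
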